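/- Let f : I → ℝ be differentiable on the interior of an interval I, with a, b ∈ I°, a < b, and f' integrable on [a,b]. Then (1/(b-a)) ∫_a^b f(x) dx − f((a+b)/2) = (b-a) [ ∫_0^{1/2} t f'(ta + (1-t)b) dt + ∫_{1/2}^1 (t-1) f'(ta + (1-t)b) dt ]. -/

import Mathlib

open MeasureTheory intervalIntegral

theorem hermite_hadamard_lemma
    (I : Set ℝ) (hI : I.OrdConnected) (f f' : ℝ → ℝ)
    (hf : ∀ x ∈ interior I, HasDerivAt f (f' x) x)
    (a b : ℝ) (ha : a ∈ interior I) (hb : b ∈ interior I) (hab : a < b)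
    (hint : IntervalIntegrable f' MeasureTheory.volume a b) :
    (1 / (b - a)) * (∫ x in a..b, f x) - f ((a + b) / 2)
      = (b - a) *
        ((∫ t in (0 : ℝ)..(1 / 2 : ℝ), t * f' (t * a + (1 - t) * b)) +
          ∫ t in (1 / 2 : ℝ)..(1 : ℝ), (t - 1) * f' (t * a + (1 - t) * b)) := by
  have hba : b - a ≠ 0 := sub_ne_zero.2 hab.ne'
  have hab' : a - b ≠ 0 := sub_ne_zero.2 hab.ne
  have hIcc : Set.Icc a b ⊆ interior I := hI.interior.out ha hb
  set φ : ℝ → ℝ := fun t => t * a + (1 - t) * b with hφdef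
  set g : ℝ → ℝ := fun t => f (φ t) with hgdef
  set F' : ℝ → ℝ := fun t => f' (φ t) with hFdef
  have hmem : ∀ t ∈ Set.Icc (0:ℝ) 1, φ t ∈ Set.Icc a b := by
    intro t ht
    obtain ⟨h0, h1⟩ := ht
    constructor <;> simp only [hφdef] <;> nlinarith
  have hφderiv : ∀ t : ℝ, HasDerivAt φ (a - b) t := by
    intro t
    have : HasDerivAt (fun t : ℝ => t * a + (1 - t) * b) (1 * a + (0 - 1) * b) t :=
      ((hasDerivAt_id t).mul_const a).add
        (((hasDerivAt_const t (1:ℝ)).sub (hasDerivAt_id t)).mul_const b)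
    convert this using 1
    ring
  have hgderiv : ∀ t ∈ Set.Icc (0:ℝ) 1, HasDerivAt g ((a - b) * F' t) t := by
    intro t ht
    have := (hf (φ t) (hIcc (hmem t ht))).comp t (hφderiv t)
    rw [mul_comm]; exact this
  -- integrability of F' on [0,1]
  have hF'int : IntervalIntegrable F' volume 0 1 := by
    have h1 : IntervalIntegrable (fun x => f' (x + b)) volume (a - b) (b - b) :=
      hint.comp_add_right b
    have h2 : IntervalIntegrable (fun x => f' ((a - b) * x + b)) volume
        ((a - b) / (a - b)) ((b - b) / (a - b)) := by
      have := h1.comp_mul_left (c := a - b)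
      simpa using this
    rw [div_self hab'] at h2
    have h2' : IntervalIntegrable (fun x => f' ((a - b) * x + b)) volume 0 1 := by
      simpa using h2.symm
    have : (fun x => f' ((a - b) * x + b)) = F' := by
      funext x; simp only [hFdef, hφdef]; ring_nf
    rwa [this] at h2'
  have hF'int' : IntervalIntegrable (fun t => (a - b) * F' t) volume 0 1 :=
    hF'int.const_mul _
  have hgcont : ContinuousOn g (Set.Icc (0:ℝ) 1) := fun t ht =>
    (hgderiv t ht).continuousAt.continuousWithinAt
  have hgint : ∀ c d : ℝ, c ∈ Set.Icc (0:ℝ) 1 → d ∈ Set.Icc (0:ℝ) 1 →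
      IntervalIntegrable g volume c d := by
    intro c d hc hd
    exact (hgcont.mono (Set.uIcc_subset_Icc hc hd)).intervalIntegrable
  have hhalf : (1/2 : ℝ) ∈ Set.Icc (0:ℝ) 1 := by norm_num
  have h0m : (0:ℝ) ∈ Set.Icc (0:ℝ) 1 := by norm_num
  have h1m : (1:ℝ) ∈ Set.Icc (0:ℝ) 1 := by norm_num
  -- integration by parts on [0, 1/2]
  have E1 : ∫ t in (0:ℝ)..(1/2:ℝ), t * ((a - b) * F' t)
      = (1/2) * g (1/2) - 0 * g 0 - ∫ t in (0:ℝ)..(1/2:ℝ), 1 * g t := by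
    apply intervalIntegral.integral_mul_deriv_eq_deriv_mul
    · intro x hx; exact hasDerivAt_id x
    · intro x hx
      exact hgderiv x (Set.uIcc_subset_Icc h0m hhalf hx)
    · exact intervalIntegrable_const
    · exact hF'int'.mono_set (Set.uIcc_subset_uIcc (by norm_num [Set.mem_uIcc]) (by norm_num [Set.mem_uIcc]))
  -- integration by parts on [1/2, 1]
  have E2 : ∫ t in (1/2:ℝ)..(1:ℝ), (t - 1) * ((a - b) * F' t)
      = (1 - 1) * g 1 - (1/2 - 1) * g (1/2) - ∫ t in (1/2:ℝ)..(1:ℝ), 1 * g t := by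
    apply intervalIntegral.integral_mul_deriv_eq_deriv_mul
    · intro x hx; simpa using (hasDerivAt_id x).sub_const 1
    · intro x hx
      exact hgderiv x (Set.uIcc_subset_Icc hhalf h1m hx)
    · exact intervalIntegrable_const
    · exact hF'int'.mono_set (Set.uIcc_subset_uIcc (by norm_num [Set.mem_uIcc]) (by norm_num [Set.mem_uIcc]))
  -- change of variables : ∫_0^1 g = (∫_a^b f)/(b-a)
  have hsub : ∫ t in (0:ℝ)..(1:ℝ), (a - b) • f (φ t) = ∫ x in (φ 0)..(φ 1), f x := by
    apply integral_comp_smul_deriv'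
    · intro x hx; exact hφderiv x
    · exact continuousOn_const
    · intro x hx
      obtain ⟨t, ht, rfl⟩ := hx
      exact ((hf _ (hIcc (hmem t (by simpa using ht)))).continuousAt).continuousWithinAt
  have hφ0 : φ 0 = b := by simp [hφdef]
  have hφ1 : φ 1 = a := by simp [hφdef]
  have hS : (a - b) * ∫ t in (0:ℝ)..(1:ℝ), g t = - ∫ x in a..b, f x := by
    rw [← intervalIntegral.integral_const_mul]
    have : ∫ t in (0:ℝ)..(1:ℝ), (a - b) * g t = ∫ x in (φ 0)..(φ 1), f x := by
      simpa [smul_eq_mul] using hsub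
    rw [this, hφ0, hφ1, intervalIntegral.integral_symm]
  -- additivity
  have hadd : (∫ t in (0:ℝ)..(1/2:ℝ), g t) + ∫ t in (1/2:ℝ)..(1:ℝ), g t
      = ∫ t in (0:ℝ)..(1:ℝ), g t :=
    intervalIntegral.integral_add_adjacent_intervals (hgint 0 (1/2) h0m hhalf)
      (hgint (1/2) 1 hhalf h1m)
  -- rewrite products
  have hA : ∫ t in (0:ℝ)..(1/2:ℝ), t * ((a - b) * F' t)
      = (a - b) * ∫ t in (0:ℝ)..(1/2:ℝ), t * F' t := by
    rw [← intervalIntegral.integral_const_mul]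
    congr 1; funext t; ring
  have hB : ∫ t in (1/2:ℝ)..(1:ℝ), (t - 1) * ((a - b) * F' t)
      = (a - b) * ∫ t in (1/2:ℝ)..(1:ℝ), (t - 1) * F' t := by
    rw [← intervalIntegral.integral_const_mul]
    congr 1; funext t; ring
  have hgm : g (1/2) = f ((a + b) / 2) := by
    simp only [hgdef, hφdef]; norm_num; ring_nf
  rw [hA] at E1
  rw [hB] at E2
  simp only [one_mul] at E1 E2
  have hAF : (∫ t in (0:ℝ)..(1/2:ℝ), t * F' t) = ∫ t in (0:ℝ)..(1/2:ℝ), t * f' (t * a + (1 - t) * b) := rfl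
  have hBF : (∫ t in (1/2:ℝ)..(1:ℝ), (t - 1) * F' t) = ∫ t in (1/2:ℝ)..(1:ℝ), (t - 1) * f' (t * a + (1 - t) * b) := rfl
  rw [← hAF, ← hBF, ← hgm]
  have hsum : (a - b) * ((∫ t in (0:ℝ)..(1/2:ℝ), t * F' t) + ∫ t in (1/2:ℝ)..(1:ℝ), (t - 1) * F' t)
      = g (1/2) - ∫ t in (0:ℝ)..(1:ℝ), g t := by
    rw [mul_add, E1, E2, ← hadd]; ring
  have := hS
  field_simp
  nlinarith [hsum, hS]
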